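/- Let g : E → ℤ/4ℤ be an H-form on a finite-dimensional ℤ/2-vector space E. Define ψ : O(E,g) → ℤ/2 by ψ(T) = rank(T − Id) mod 2. Then ψ is a group homomorphism, i.e. ψ(T ∘ S) = ψ(T) + ψ(S) for all T, S ∈ O(E,g). -/

import Mathlib

open Module LinearMap

lemma even_finrank_of_alt_nondeg {K : Type*} [Field K] :
    ∀ (n : ℕ) {V : Type*} [AddCommGroup V] [Module K V] [FiniteDimensional K V]
      (B : V →ₗ[K] V →ₗ[K] K), (∀ x, B x x = 0) → (∀ x, (∀ y, B x y = 0) → x = 0) →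
      finrank K V = n → Even n := by
  intro n
  induction n using Nat.strong_induction_on with
  | _ n ih =>
    intro V _ _ _ B halt hnd hdim
    rcases Nat.eq_zero_or_pos n with h0 | hpos
    · simp [h0]
    have hskew : ∀ x y : V, B x y = - B y x := by
      intro x y
      have h := halt (x + y)
      simp only [map_add, LinearMap.add_apply, halt] at h
      linear_combination h
    have : Nontrivial V := by
      rw [← Module.finrank_pos_iff (R := K)]
      omega
    obtain ⟨u, hu⟩ := exists_ne (0 : V)
    have hv : ∃ v, B u v ≠ 0 := by
      by_contra hcon
      push_neg at hcon
      exact hu (hnd u hcon)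
    obtain ⟨v, hc⟩ := hv
    set c := B u v with hcdef
    set P : Submodule K V := Submodule.span K {u, v} with hP
    set W : Submodule K V := LinearMap.ker (B u) ⊓ LinearMap.ker (B v) with hW
    have hmemW : ∀ x : V, x ∈ W ↔ B u x = 0 ∧ B v x = 0 := by
      intro x; simp [hW, LinearMap.mem_ker]
    have hsup : P ⊔ W = ⊤ := by
      rw [Submodule.eq_top_iff']
      intro x
      set s : K := -(c⁻¹ * B v x) with hs
      set t : K := c⁻¹ * B u x with ht
      have hxd : x = (s • u + t • v) + (x - s • u - t • v) := by abel
      rw [hxd]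
      apply Submodule.add_mem_sup
      · exact Submodule.add_mem _ (Submodule.smul_mem _ _ (Submodule.subset_span (by simp)))
          (Submodule.smul_mem _ _ (Submodule.subset_span (by simp)))
      · rw [hmemW]
        constructor
        · simp only [map_sub, map_smul, smul_eq_mul, halt, ht]
          field_simp
          rw [hcdef]; ring
        · simp only [map_sub, map_smul, smul_eq_mul, halt, hs,
            show B v u = -c from hskew v u]
          field_simp
          ring
    have hinf : P ⊓ W = ⊥ := by
      rw [Submodule.eq_bot_iff]
      intro x hx
      obtain ⟨hxP, hxW⟩ := Submodule.mem_inf.mp hx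
      rw [hmemW] at hxW
      obtain ⟨s, t, rfl⟩ := Submodule.mem_span_pair.mp hxP
      have h1 : t * c = 0 := by
        have h := hxW.1
        simp only [map_add, map_smul, smul_eq_mul, halt] at h
        linear_combination h
      have h2 : s * c = 0 := by
        have h := hxW.2
        simp only [map_add, map_smul, smul_eq_mul, halt,
          show B v u = -c from hskew v u] at h
        linear_combination -h
      have ht : t = 0 := by
        rcases mul_eq_zero.mp h1 with h | h
        · exact h
        · exact absurd h hc
      have hs : s = 0 := by
        rcases mul_eq_zero.mp h2 with h | h
        · exact h
        · exact absurd h hc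
      simp [hs, ht]
    have hli : LinearIndependent K ![u, v] := by
      rw [LinearIndependent.pair_iff]
      intro s t hst
      have h1 : B u (s • u + t • v) = 0 := by rw [hst]; simp
      have h2 : B v (s • u + t • v) = 0 := by rw [hst]; simp
      simp only [map_add, map_smul, smul_eq_mul, halt,
        show B v u = -c from hskew v u] at h1 h2
      have ht : t = 0 := by
        rcases mul_eq_zero.mp (show t * c = 0 by linear_combination h1) with h | h
        · exact h
        · exact absurd h hc
      have hs : s = 0 := by
        rcases mul_eq_zero.mp (show s * c = 0 by linear_combination -h2) with h | h
        · exact h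
        · exact absurd h hc
      exact ⟨hs, ht⟩
    have hPrank : finrank K P = 2 := by
      have hset : ({u, v} : Set V) = Set.range ![u, v] := by
        ext x
        simp [Matrix.range_cons, Matrix.range_empty]
        tauto
      rw [hP, hset, finrank_span_eq_card hli]
      simp
    have hWrank : finrank K W + 2 = n := by
      have h := Submodule.finrank_sup_add_finrank_inf_eq P W
      rw [hsup, hinf, finrank_top, finrank_bot, hPrank, hdim] at h
      omega
    set BW : (↥W) →ₗ[K] (↥W) →ₗ[K] K := LinearMap.BilinForm.restrict B W with hBW
    have haltW : ∀ x : ↥W, BW x x = 0 := fun x => halt x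
    have hndW : ∀ x : ↥W, (∀ y : ↥W, BW x y = 0) → x = 0 := by
      intro x hx
      have hxW := (hmemW (x : V)).mp x.2
      have hx0 : (x : V) = 0 := by
        apply hnd
        intro z
        obtain ⟨p, hp, w, hw, rfl⟩ : ∃ p ∈ P, ∃ w ∈ W, p + w = z := by
          have hz : z ∈ P ⊔ W := by rw [hsup]; trivial
          obtain ⟨p, hp, w, hw, h⟩ := Submodule.mem_sup.mp hz
          exact ⟨p, hp, w, hw, h⟩
        obtain ⟨s, t, rfl⟩ := Submodule.mem_span_pair.mp hp
        have hxu : B (x : V) u = 0 := by rw [hskew, hxW.1]; ring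
        have hxv : B (x : V) v = 0 := by rw [hskew, hxW.2]; ring
        have hxw : B (x : V) w = 0 := hx ⟨w, hw⟩
        simp only [map_add, map_smul, smul_eq_mul, hxu, hxv, hxw]
        ring
      exact Subtype.ext hx0
    obtain ⟨k, hk⟩ := ih (n - 2) (by omega) BW haltW hndW (by omega)
    exact ⟨k + 1, by omega⟩

lemma even_rank_alt {K : Type*} [Field K] {V : Type*} [AddCommGroup V] [Module K V]
    [FiniteDimensional K V] (B : V →ₗ[K] V →ₗ[K] K) (halt : ∀ x, B x x = 0) :
    Even (finrank K (LinearMap.range B)) := by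
  have hskew : ∀ x y : V, B x y = - B y x := by
    intro x y
    have h := halt (x + y)
    simp only [map_add, LinearMap.add_apply, halt] at h
    linear_combination h
  set R : Submodule K V := LinearMap.ker B with hR
  have hker : ∀ x : V, R ≤ LinearMap.ker (B x) := by
    intro x y hy
    have hy0 : B y = 0 := hy
    simp only [LinearMap.mem_ker, hskew x y, hy0]
    simp
  set G : V →ₗ[K] ((V ⧸ R) →ₗ[K] K) :=
    { toFun := fun x => R.liftQ (B x) (hker x)
      map_add' := by
        intro x y
        apply Submodule.linearMap_qext
        ext z
        simp
      map_smul' := by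
        intro a x
        apply Submodule.linearMap_qext
        ext z
        simp } with hG
  have hGR : R ≤ LinearMap.ker G := by
    intro x hx
    have hx0 : B x = 0 := hx
    simp only [LinearMap.mem_ker, hG]
    apply Submodule.linearMap_qext
    ext z
    simp [hx0]
  set Bbar : (V ⧸ R) →ₗ[K] (V ⧸ R) →ₗ[K] K := R.liftQ G hGR with hBbar
  have hBbar_apply : ∀ x y : V, Bbar (R.mkQ x) (R.mkQ y) = B x y := by
    intro x y
    simp [hBbar, hG]
  have haltbar : ∀ z : V ⧸ R, Bbar z z = 0 := by
    intro z
    obtain ⟨x, rfl⟩ := R.mkQ_surjective z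
    rw [hBbar_apply]
    exact halt x
  have hndbar : ∀ z : V ⧸ R, (∀ w : V ⧸ R, Bbar z w = 0) → z = 0 := by
    intro z hz
    obtain ⟨x, rfl⟩ := R.mkQ_surjective z
    have hx : x ∈ R := by
      have : ∀ y : V, B x y = 0 := by
        intro y
        have := hz (R.mkQ y)
        rwa [hBbar_apply] at this
      exact LinearMap.ext this
    simpa [Submodule.Quotient.mk_eq_zero] using (Submodule.Quotient.mk_eq_zero R).mpr hx
  have heven := even_finrank_of_alt_nondeg (finrank K (V ⧸ R)) Bbar haltbar hndbar rfl
  have h1 : finrank K (V ⧸ R) + finrank K R = finrank K V :=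
    Submodule.finrank_quotient_add_finrank R
  have h2 : finrank K (LinearMap.range B) + finrank K (LinearMap.ker B) = finrank K V :=
    LinearMap.finrank_range_add_finrank_ker B
  have : finrank K (LinearMap.range B) = finrank K (V ⧸ R) := by
    rw [hR] at h1 ⊢
    omega
  rwa [this]

set_option maxHeartbeats 1000000 in
/-- `ψ(T) = rank(T - Id) mod 2` is a group homomorphism on `O(E,g)`. -/
theorem psi_is_homomorphism
    {E : Type*} [AddCommGroup E] [Module (ZMod 2) E] [FiniteDimensional (ZMod 2) E]
    (C : E →ₗ[ZMod 2] E →ₗ[ZMod 2] ZMod 2) (g : E → ZMod 4)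
    (hsymm : ∀ x y : E, C x y = C y x)
    (hnd : ∀ x : E, (∀ y : E, C x y = 0) → x = 0)
    (hadd : ∀ x y : E, g (x + y) = g x + g y + 2 * ((C x y).val : ZMod 4))
    (hodd : ∃ x : E, g x = 1 ∨ g x = 3)
    (T S : Module.End (ZMod 2) E)
    (hT : ∀ x : E, g (T x) = g x) (hS : ∀ x : E, g (S x) = g x) :
    (Module.finrank (ZMod 2) (LinearMap.range (T * S - 1)) : ZMod 2) =
      (Module.finrank (ZMod 2) (LinearMap.range (T - 1)) : ZMod 2) +
      (Module.finrank (ZMod 2) (LinearMap.range (S - 1)) : ZMod 2) := by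
  classical
  -- char 2 facts
  have h2 : ∀ z : E, z + z = 0 := by
    intro z
    have h := two_smul (ZMod 2) z
    rw [show (2 : ZMod 2) = 0 from rfl, zero_smul] at h
    exact h.symm
  have hz2 : ∀ z : E, (2:ℤ) • z = 0 := fun z => by rw [two_zsmul]; exact h2 z
  have hneg : ∀ z : E, -z = z := fun z => neg_eq_of_add_eq_zero_left (h2 z)
  have hsub : ∀ x y : E, x - y = x + y := fun x y => by rw [sub_eq_add_neg, hneg]
  have hmove : ∀ a b c : E, a + b = c → a = c + b := by
    intro a b c h; rw [← h, add_assoc, h2, add_zero]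
  -- scalar facts
  have l1 : ∀ c d : ZMod 2, (2*(c.val:ZMod 4)) = 2*(d.val:ZMod 4) → c = d := by decide
  have l3 : ∀ c d : ZMod 2, 2*(((c+d).val : ZMod 4)) = 2*(c.val:ZMod 4) + 2*(d.val:ZMod 4) := by
    decide
  have l4 : ∀ c : ZMod 2, 2*((c.val : ZMod 4)) = 0 → c = 0 := by decide
  have l5 : ∀ a : ZMod 4, 2 * (2 * a) = 0 := by decide
  have lz : ∀ a : ZMod 2, a + a = 0 := by decide
  have l44 : ∀ a : ZMod 4, 4 * a = 0 := by decide
  have lzeq : ∀ a b : ZMod 2, a + b = 0 → a = b := by decide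
  -- basic facts about g
  have g0 : g 0 = 0 := by
    have h := hadd 0 0
    simp only [add_zero, map_zero, LinearMap.zero_apply, ZMod.val_zero, Nat.cast_zero,
      mul_zero] at h
    linear_combination -h
  have d1 : ∀ x : E, 2 * ((C x x).val : ZMod 4) = 2 * g x := by
    intro x
    have h := hadd x x
    rw [h2 x, g0] at h
    have h4 : (4 : ZMod 4) * g x = 0 := by
      rw [show (4:ZMod 4) = 0 by decide, zero_mul]
    linear_combination -h - h4
  -- orthogonal transformations preserve C
  have hpres : ∀ (U : Module.End (ZMod 2) E), (∀ x, g (U x) = g x) →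
      ∀ x y, C (U x) (U y) = C x y := by
    intro U hU x y
    have h1 : g (x+y) = g (U x) + g (U y) + 2*((C (U x) (U y)).val : ZMod 4) := by
      rw [← hU (x+y), map_add, hadd (U x) (U y)]
    rw [hU x, hU y] at h1
    apply l1
    linear_combination h1 - hadd x y + l44 ((C (U x)) (U y)).val - l44 ((C x) y).val
  have hsurj : ∀ (U : Module.End (ZMod 2) E), (∀ x, g (U x) = g x) →
      Function.Surjective U := by
    intro U hU
    rw [← LinearMap.injective_iff_surjective]
    intro x y hxy
    have hd : U (x - y) = 0 := by rw [map_sub, hxy, sub_self]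
    have : x - y = 0 := by
      apply hnd
      intro z
      rw [← hpres U hU (x - y) z]
      simp [hd]
    rw [← sub_eq_zero]; exact this
  -- the chi computation
  have keyχ : ∀ (U : Module.End (ZMod 2) E), (∀ x, g (U x) = g x) → ∀ p : E,
      g (U p + p) = 2 * ((C p (U p + p)).val : ZMod 4) := by
    intro U hU p
    have e1 := hadd (U p) p
    rw [hU p] at e1
    have e2 : (C p (U p + p)) = C p p + C (U p) p := by
      rw [map_add, hsymm p (U p)]
      ring
    rw [e1, e2, l3]
    linear_combination - d1 p
  have Cvv0 : ∀ (U : Module.End (ZMod 2) E), (∀ x, g (U x) = g x) → ∀ p : E,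
      C (U p + p) (U p + p) = 0 := by
    intro U hU p
    apply l4
    have h := d1 (U p + p)
    rw [keyχ U hU p] at h
    rw [h]; exact l5 _
  -- bilinear form infrastructure
  have CRefl : LinearMap.IsRefl C := fun x y hxy => by rw [hsymm]; exact hxy
  have CNondeg : LinearMap.BilinForm.Nondegenerate C :=
    ⟨hnd, fun y hy => hnd y (fun x => by rw [hsymm]; exact hy x)⟩
  set n := finrank (ZMod 2) E with hn
  have dim_orth : ∀ W : Submodule (ZMod 2) E,
      finrank (ZMod 2) W + finrank (ZMod 2) (LinearMap.BilinForm.orthogonal C W) = n := by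
    intro W
    have h := LinearMap.BilinForm.finrank_add_finrank_orthogonal (B := C) CRefl W
    rwa [LinearMap.BilinForm.orthogonal_top_eq_bot CNondeg, inf_bot_eq, finrank_bot,
      add_zero] at h
  have fapp : ∀ (U : Module.End (ZMod 2) E) (x : E), (U - 1) x = U x + x := by
    intro U x
    rw [LinearMap.sub_apply, Module.End.one_apply, hsub]
  have adj : ∀ (U : Module.End (ZMod 2) E), (∀ x, g (U x) = g x) →
      ∀ x y : E, C ((U - 1) x) y = C (U x) ((U - 1) y) := by
    intro U hU x y
    rw [fapp, fapp]
    simp only [map_add, LinearMap.add_apply]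
    rw [← hpres U hU x y]
    ring
  have kerf_iff : ∀ (U : Module.End (ZMod 2) E), (∀ x, g (U x) = g x) →
      ∀ y : E, (U - 1) y = 0 ↔ ∀ x : E, C ((U - 1) x) y = 0 := by
    intro U hU y
    constructor
    · intro hy x
      rw [adj U hU, hy, map_zero]
    · intro hy
      apply hnd
      intro z
      obtain ⟨x, rfl⟩ := hsurj U hU z
      rw [hsymm, ← adj U hU]
      exact hy x
  have orth_range : ∀ (U : Module.End (ZMod 2) E), (∀ x, g (U x) = g x) →
      LinearMap.BilinForm.orthogonal C (LinearMap.range (U - 1)) = LinearMap.ker (U - 1) := by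
    intro U hU
    ext y
    rw [LinearMap.BilinForm.mem_orthogonal_iff, LinearMap.mem_ker, kerf_iff U hU]
    constructor
    · intro h x
      exact h _ ⟨x, rfl⟩
    · rintro h _ ⟨x, rfl⟩
      exact h x
  have kerf_perp : ∀ (U : Module.End (ZMod 2) E), (∀ x, g (U x) = g x) →
      ∀ y : E, (U - 1) y = 0 → ∀ w ∈ LinearMap.range (U - 1), C y w = 0 := by
    intro U hU y hy w hw
    obtain ⟨m, rfl⟩ := hw
    rw [hsymm]
    exact (kerf_iff U hU y).mp hy m
  set VT := LinearMap.range (T - 1) with hVT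
  set VS := LinearMap.range (S - 1) with hVS
  set D := VT ⊓ VS with hD
  have oSup : LinearMap.BilinForm.orthogonal C (VT ⊔ VS)
      = LinearMap.ker (T - 1) ⊓ LinearMap.ker (S - 1) := by
    rw [← orth_range T hT, ← orth_range S hS, ← hVT, ← hVS]
    apply le_antisymm
    · exact le_inf (LinearMap.BilinForm.orthogonal_le le_sup_left)
        (LinearMap.BilinForm.orthogonal_le le_sup_right)
    · intro y hy
      rw [LinearMap.BilinForm.mem_orthogonal_iff]
      intro m hm
      obtain ⟨p, hp, q, hq, rfl⟩ := Submodule.mem_sup.mp hm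
      have h1 : C p y = 0 := hy.1 p hp
      have h2 : C q y = 0 := hy.2 q hq
      show C (p + q) y = 0
      rw [map_add, LinearMap.add_apply, h1, h2, add_zero]
  -- dimension bookkeeping
  have eT : finrank (ZMod 2) VT + finrank (ZMod 2) (LinearMap.ker (T - 1)) = n := by
    have h := dim_orth VT
    rwa [hVT, orth_range T hT, ← hVT] at h
  have eS : finrank (ZMod 2) VS + finrank (ZMod 2) (LinearMap.ker (S - 1)) = n := by
    have h := dim_orth VS
    rwa [hVS, orth_range S hS, ← hVS] at h
  have eSup : finrank (ZMod 2) (VT ⊔ VS : Submodule (ZMod 2) E)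
      + finrank (ZMod 2) (LinearMap.ker (T - 1) ⊓ LinearMap.ker (S - 1) : Submodule (ZMod 2) E)
      = n := by
    have h := dim_orth (VT ⊔ VS)
    rwa [oSup] at h
  have eD : finrank (ZMod 2) D + finrank (ZMod 2) (LinearMap.BilinForm.orthogonal C D) = n :=
    dim_orth D
  have habd : finrank (ZMod 2) (VT ⊔ VS : Submodule (ZMod 2) E) + finrank (ZMod 2) D
      = finrank (ZMod 2) VT + finrank (ZMod 2) VS := by
    rw [hD]; exact Submodule.finrank_sup_add_finrank_inf_eq VT VS
  have hsupinf := Submodule.finrank_sup_add_finrank_inf_eq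
    (LinearMap.ker (T - 1)) (LinearMap.ker (S - 1))
  have oInf : LinearMap.BilinForm.orthogonal C D
      = LinearMap.ker (T - 1) ⊔ LinearMap.ker (S - 1) := by
    have le1 : LinearMap.ker (T - 1) ⊔ LinearMap.ker (S - 1)
        ≤ LinearMap.BilinForm.orthogonal C D := by
      apply sup_le
      · rw [← orth_range T hT, ← hVT]
        exact LinearMap.BilinForm.orthogonal_le inf_le_left
      · rw [← orth_range S hS, ← hVS]
        exact LinearMap.BilinForm.orthogonal_le inf_le_right
    have hle : finrank (ZMod 2) (LinearMap.BilinForm.orthogonal C D)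
        ≤ finrank (ZMod 2) (LinearMap.ker (T - 1) ⊔ LinearMap.ker (S - 1) : Submodule (ZMod 2) E) := by
      have h1 := Submodule.finrank_le (VT ⊔ VS : Submodule (ZMod 2) E)
      omega
    exact (Submodule.eq_of_le_of_finrank_le le1 hle).symm
  -- linear sections of T-1 and S-1 onto their ranges
  obtain ⟨σT, hσT⟩ := (T - 1).rangeRestrict.exists_rightInverse_of_surjective
    (LinearMap.range_eq_top.mpr (T - 1).surjective_rangeRestrict)
  obtain ⟨σS, hσS⟩ := (S - 1).rangeRestrict.exists_rightInverse_of_surjective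
    (LinearMap.range_eq_top.mpr (S - 1).surjective_rangeRestrict)
  have hσT' : ∀ v : ↥VT, (T - 1) (σT v) = (v : E) := by
    intro v
    exact congrArg Subtype.val (LinearMap.congr_fun hσT v)
  have hσS' : ∀ v : ↥VS, (S - 1) (σS v) = (v : E) := by
    intro v
    exact congrArg Subtype.val (LinearMap.congr_fun hσS v)
  have hDT : D ≤ VT := by rw [hD]; exact inf_le_left
  have hDS : D ≤ VS := by rw [hD]; exact inf_le_right
  set mm : ↥D →ₗ[ZMod 2] E :=
    σT ∘ₗ Submodule.inclusion hDT + σS ∘ₗ Submodule.inclusion hDS + D.subtype with hmm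
  have hmm_apply : ∀ v : ↥D,
      mm v = σT (Submodule.inclusion hDT v) + σS (Submodule.inclusion hDS v) + (v : E) :=
    fun v => rfl
  have hpv : ∀ v : ↥D, (T - 1) (σT (Submodule.inclusion hDT v)) = (v : E) := by
    intro v
    rw [hσT']
    rfl
  have hqv : ∀ v : ↥D, (S - 1) (σS (Submodule.inclusion hDS v)) = (v : E) := by
    intro v
    rw [hσS']
    rfl
  set β : ↥D →ₗ[ZMod 2] ↥D →ₗ[ZMod 2] ZMod 2 := LinearMap.compl₁₂ C mm D.subtype with hβ
  have hβ_apply : ∀ v w : ↥D, β v w = C (mm v) (w : E) := fun v w => rfl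
  -- β is alternating
  have βalt : ∀ v : ↥D, β v v = 0 := by
    intro v
    set p := σT (Submodule.inclusion hDT v) with hp
    set q := σS (Submodule.inclusion hDS v) with hq
    have h1 : g (v : E) = 2 * ((C p (v : E)).val : ZMod 4) := by
      have h := keyχ T hT p
      rw [← fapp T p, hpv v] at h
      exact h
    have h1' : g (v : E) = 2 * ((C q (v : E)).val : ZMod 4) := by
      have h := keyχ S hS q
      rw [← fapp S q, hqv v] at h
      exact h
    have hpq : C p (v : E) = C q (v : E) := l1 _ _ (by rw [← h1, ← h1'])
    have hvv : C (v : E) (v : E) = 0 := by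
      have h := Cvv0 T hT p
      rw [← fapp T p, hpv v] at h
      exact h
    rw [hβ_apply, hmm_apply]
    simp only [map_add, LinearMap.add_apply]
    rw [hpq, hvv, add_zero]
    exact lz _
  -- the kernel of TS - 1 and the map u'
  set Kr : Submodule (ZMod 2) E := LinearMap.ker (T * S - 1) with hKr
  have hKmem : ∀ x : E, x ∈ Kr ↔ T (S x) = x := by
    intro x
    rw [hKr, LinearMap.mem_ker, LinearMap.sub_apply, Module.End.one_apply,
      Module.End.mul_apply, sub_eq_zero]
  set u' : ↥Kr →ₗ[ZMod 2] E := (S - 1) ∘ₗ Kr.subtype with hu'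
  have hu'_apply : ∀ x : ↥Kr, u' x = (S - 1) (x : E) := fun x => rfl
  have hrle : LinearMap.range u' ≤ D := by
    rintro _ ⟨x, rfl⟩
    rw [hu'_apply, hD, Submodule.mem_inf]
    constructor
    · refine ⟨S (x : E), ?_⟩
      rw [fapp, fapp, (hKmem (x : E)).mp x.2]
      exact add_comm _ _
    · exact ⟨(x : E), rfl⟩
  -- the radical of β is exactly the image of u'
  have hc2 : Submodule.comap D.subtype (LinearMap.range u') = LinearMap.ker β := by
    ext v
    rw [Submodule.mem_comap, LinearMap.mem_ker]
    simp only [Submodule.subtype_apply]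
    constructor
    · rintro ⟨x, hx⟩
      rw [hu'_apply] at hx
      refine LinearMap.ext fun w => ?_
      rw [LinearMap.zero_apply, hβ_apply, hmm_apply]
      set p := σT (Submodule.inclusion hDT v) with hp
      set q := σS (Submodule.inclusion hDS v) with hq
      have hTS : T (S (x : E)) = (x : E) := (hKmem (x : E)).mp x.2
      have hfTSx : (T - 1) (S (x : E)) = (v : E) := by
        rw [fapp, hTS, ← hx, fapp]
        exact add_comm _ _
      have hker1 : (T - 1) (p + S (x : E)) = 0 := by
        rw [map_add, hpv v, hfTSx, h2]
      have hker2 : (S - 1) (q + (x : E)) = 0 := by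
        rw [map_add, hqv v, hx, h2]
      have hCp : C p (w : E) = C (S (x : E)) (w : E) := by
        apply lzeq
        rw [← LinearMap.add_apply, ← map_add]
        exact kerf_perp T hT _ hker1 (w : E) (hDT w.2)
      have hCq : C q (w : E) = C (x : E) (w : E) := by
        apply lzeq
        rw [← LinearMap.add_apply, ← map_add]
        exact kerf_perp S hS _ hker2 (w : E) (hDS w.2)
      simp only [map_add, LinearMap.add_apply]
      rw [hCp, hCq]
      have hSxx : C (S (x : E)) (w : E) + C (x : E) (w : E) = C (v : E) (w : E) := by
        rw [← LinearMap.add_apply, ← map_add]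
        congr 1
        rw [← hx, fapp]
      rw [hSxx]
      exact lz _
    · intro hv
      set p := σT (Submodule.inclusion hDT v) with hp
      set q := σS (Submodule.inclusion hDS v) with hq
      have hmOrth : mm v ∈ LinearMap.BilinForm.orthogonal C D := by
        rw [LinearMap.BilinForm.mem_orthogonal_iff]
        intro z hz
        show C z (mm v) = 0
        rw [hsymm]
        exact LinearMap.congr_fun hv ⟨z, hz⟩
      have hmSup : mm v ∈ LinearMap.ker (T - 1) ⊔ LinearMap.ker (S - 1) := by
        rw [← oInf]
        exact hmOrth
      obtain ⟨k1, hk1, k2, hk2, hsum⟩ := Submodule.mem_sup.mp hmSup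
      set x : E := q + k2 with hxdef
      have hfSx : (S - 1) x = (v : E) := by
        rw [hxdef, map_add, hqv v, LinearMap.mem_ker.mp hk2, add_zero]
      have hfTk2 : (T - 1) k2 = (T - 1) (mm v) := by
        rw [← hsum, map_add, LinearMap.mem_ker.mp hk1, zero_add]
      have hfTm : (T - 1) (mm v) = (v : E) + ((T - 1) q + (T - 1) (v : E)) := by
        rw [hmm_apply, map_add, map_add, hpv v]
        abel
      have hxK : x ∈ Kr := by
        rw [hKmem]
        have e1 : S x = (v : E) + x := by
          have h := fapp S x
          rw [hfSx] at h
          exact hmove _ _ _ h.symm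
        rw [e1, map_add]
        have e2 : T x = (T - 1) x + x := by
          have h := fapp T x
          exact hmove _ _ _ h.symm
        have e3 : (T - 1) x = (T - 1) q + (T - 1) k2 := by rw [hxdef, map_add]
        have e4 : (T - 1) (v : E) = T (v : E) + (v : E) := fapp T (v : E)
        rw [e2, e3, hfTk2, hfTm, e4]
        rw [← sub_eq_zero]
        abel_nf
        simp [hz2]
      exact ⟨⟨x, hxK⟩, hfSx⟩
  -- dimension count
  have E1 : finrank (ZMod 2) (LinearMap.range (T * S - 1)) + finrank (ZMod 2) Kr = n := by
    rw [hKr]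
    exact LinearMap.finrank_range_add_finrank_ker (T * S - 1)
  have E2 : finrank (ZMod 2) (LinearMap.range u') + finrank (ZMod 2) (LinearMap.ker u')
      = finrank (ZMod 2) Kr :=
    LinearMap.finrank_range_add_finrank_ker u'
  have hKK : LinearMap.ker (T - 1) ⊓ LinearMap.ker (S - 1) ≤ Kr := by
    intro z hz
    obtain ⟨hz1, hz2⟩ := Submodule.mem_inf.mp hz
    have hTz : T z = z := by
      have h := fapp T z
      rw [LinearMap.mem_ker.mp hz1] at h
      have := hmove _ _ _ h.symm
      simpa using this
    have hSz : S z = z := by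
      have h := fapp S z
      rw [LinearMap.mem_ker.mp hz2] at h
      have := hmove _ _ _ h.symm
      simpa using this
    rw [hKmem, hSz, hTz]
  have E3 : finrank (ZMod 2) (LinearMap.ker u')
      = finrank (ZMod 2) (LinearMap.ker (T - 1) ⊓ LinearMap.ker (S - 1) : Submodule (ZMod 2) E) := by
    have hker_eq : LinearMap.ker u'
        = Submodule.comap Kr.subtype (LinearMap.ker (T - 1) ⊓ LinearMap.ker (S - 1)) := by
      ext z
      rw [LinearMap.mem_ker, Submodule.mem_comap, Submodule.mem_inf, hu'_apply]
      simp only [Submodule.subtype_apply]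
      constructor
      · intro hz
        have hSz : S (z : E) = (z : E) := by
          have h := fapp S (z : E)
          rw [hz] at h
          have := hmove _ _ _ h.symm
          simpa using this
        have hTz : T (z : E) = (z : E) := by
          have h := (hKmem (z : E)).mp z.2
          rwa [hSz] at h
        constructor
        · rw [LinearMap.mem_ker, fapp, hTz, h2]
        · rw [LinearMap.mem_ker, fapp, hSz, h2]
      · intro ⟨_, hz2⟩
        exact LinearMap.mem_ker.mp hz2
    rw [hker_eq]
    exact LinearEquiv.finrank_eq (Submodule.comapSubtypeEquivOfLe hKK)
  have E7 : finrank (ZMod 2) (LinearMap.range β) + finrank (ZMod 2) (LinearMap.ker β)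
      = finrank (ZMod 2) D :=
    LinearMap.finrank_range_add_finrank_ker β
  have E8 : finrank (ZMod 2) (LinearMap.ker β) = finrank (ZMod 2) (LinearMap.range u') := by
    rw [← hc2]
    exact LinearEquiv.finrank_eq (Submodule.comapSubtypeEquivOfLe hrle)
  obtain ⟨k, hk⟩ := even_rank_alt β βalt
  have key : finrank (ZMod 2) (LinearMap.range (T * S - 1))
      + (finrank (ZMod 2) VT + finrank (ZMod 2) VS)
      = 2 * (finrank (ZMod 2) (VT ⊔ VS : Submodule (ZMod 2) E) + k) := by
    omega
  have kc := congrArg (fun t : ℕ => (t : ZMod 2)) key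
  push_cast at kc
  rw [show ((2 : ZMod 2)) = 0 by decide, zero_mul] at kc
  exact lzeq _ _ (by linear_combination kc)
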